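/- Let λ_m > 0, λ_r > 0, let n be a natural number, and let ρ, δ, p_c, θ, ω, μ_m, μ_r, S be real numbers with λ_r·μ_m² + n·λ_m·μ_r² > 0. Define Δ = (4·λ_m·λ_r·δ + 2·λ_m·λ_r·ρ - 4·λ_r·μ_m·p_c·ω·θ·S)² - 16·λ_r·(λ_r·μ_m² + n·λ_m·μ_r²)·(p_c·θ·ω·S)², assume Δ ≥ 0, and set A = (4·δ·λ_m·λ_r + 2·λ_m·λ_r·ρ - 4·λ_r·μ_m·p_c·ω·θ·S - √Δ)/(8·(λ_r·μ_m² + n·λ_m·μ_r²)). Then λ_m·λ_r·(ρ + δ) - λ_r·p_c·θ·ω·μ_m·S - 2·A·(λ_r·μ_m² + n·λ_m·μ_r²) = (2·λ_m·λ_r·ρ + √Δ)/4. Consequently, if 2·λ_m·λ_r·ρ + √Δ > 0, then for any real numbers θ, p_i, q_i the unique real number D satisfying ρ·D = θ·p_i·q_i + D·((p_c·θ·ω·μ_m·S + 2·A·μ_m²)/λ_m + 2·n·A·μ_r²/λ_r - δ) is D = 4·λ_m·λ_r·θ·p_i·q_i/(2·λ_m·λ_r·ρ + √Δ). -/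

import Mathlib

/-- In the Stackelberg model, with `A` the minus-sign root, one has
`λ_mλ_r(ρ+δ) - λ_r p_c θ ω μ_m S - 2A(λ_rμ_m² + nλ_mμ_r²) = (2λ_mλ_rρ + √Δ)/4`;
consequently the coefficient equation for the retailer's value-function slope
`D` has the unique solution `D = 4λ_mλ_r θ p_i q_i/(2λ_mλ_rρ + √Δ)`. -/
theorem stmt_19 (lm lr : ℝ) (n : ℕ) (rho del pc th om mum mur S Del A : ℝ)
    (hlm : 0 < lm) (hlr : 0 < lr)
    (hcoef : 0 < lr * mum ^ 2 + (n : ℝ) * lm * mur ^ 2)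
    (hDel : Del = (4 * lm * lr * del + 2 * lm * lr * rho - 4 * lr * mum * pc * om * th * S) ^ 2
      - 16 * lr * (lr * mum ^ 2 + (n : ℝ) * lm * mur ^ 2) * (pc * th * om * S) ^ 2)
    (hDelpos : 0 ≤ Del)
    (hA : A = (4 * del * lm * lr + 2 * lm * lr * rho - 4 * lr * mum * pc * om * th * S -
      Real.sqrt Del) / (8 * (lr * mum ^ 2 + (n : ℝ) * lm * mur ^ 2))) :
    lm * lr * (rho + del) - lr * pc * th * om * mum * S -
      2 * A * (lr * mum ^ 2 + (n : ℝ) * lm * mur ^ 2) =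
      (2 * lm * lr * rho + Real.sqrt Del) / 4 ∧
    (0 < 2 * lm * lr * rho + Real.sqrt Del →
      ∀ pi qi : ℝ, ∀ D : ℝ,
        (rho * D = th * pi * qi +
          D * ((pc * th * om * mum * S + 2 * A * mum ^ 2) / lm
            + 2 * (n : ℝ) * A * mur ^ 2 / lr - del)) ↔
        D = 4 * lm * lr * th * pi * qi / (2 * lm * lr * rho + Real.sqrt Del)) := by
  have hcne : (lr * mum ^ 2 + (n : ℝ) * lm * mur ^ 2) ≠ 0 := hcoef.ne'
  have h1 : lm * lr * (rho + del) - lr * pc * th * om * mum * S -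
      2 * A * (lr * mum ^ 2 + (n : ℝ) * lm * mur ^ 2) =
      (2 * lm * lr * rho + Real.sqrt Del) / 4 := by
    rw [hA]; generalize (lr * mum ^ 2 + (n : ℝ) * lm * mur ^ 2) = c at hcne ⊢; field_simp; ring
  refine ⟨h1, fun hpos pi qi D => ?_⟩
  have hsne := hpos.ne'
  have hlmne := hlm.ne'
  have hlrne := hlr.ne'
  rw [eq_div_iff hsne]
  constructor
  · intro h
    have h' : lm * lr * (rho * D) = lm * lr * (th * pi * qi +
        D * ((pc * th * om * mum * S + 2 * A * mum ^ 2) / lm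
          + 2 * (n : ℝ) * A * mur ^ 2 / lr - del)) := by rw [h]
    field_simp at h'
    linear_combination 4*h' - 4*D*h1
  · intro h
    have h2 : 2 * A * (lr * mum ^ 2 + (n : ℝ) * lm * mur ^ 2) =
        lm * lr * (rho + del) - lr * pc * th * om * mum * S -
        (2 * lm * lr * rho + Real.sqrt Del) / 4 := by linarith
    field_simp
    linear_combination h/4 - D*h2
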